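/- Every cut of a connected graph is contained in a single circuit-connected component of its edge set. -/

import Mathlib

structure Multigraph (V E : Type*) where
  fst : E → V
  snd : E → V

namespace Multigraph

variable {V E : Type*}

/-- The edge `e` joins vertices `u` and `w` (in either orientation). -/
def Joins (G : Multigraph V E) (e : E) (u w : V) : Prop :=
  (G.fst e = u ∧ G.snd e = w) ∨ (G.fst e = w ∧ G.snd e = u)

/-- Reachability, using only edges in `F`. -/
def Reach (G : Multigraph V E) (F : Set E) : V → V → Prop :=
  Relation.EqvGen (fun u w => ∃ e ∈ F, G.Joins e u w)

/-- A graph is connected if any two vertices are joined by a walk. -/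
def Connected (G : Multigraph V E) : Prop := ∀ u w : V, G.Reach Set.univ u w

/-- A cut of a connected graph: a set `c` of edges such that removing `c`
leaves exactly two connected components (`A` and `Aᶜ`), and every edge of `c`
joins these two components. -/
def IsCut (G : Multigraph V E) (c : Set E) : Prop :=
  ∃ A : Set V, A.Nonempty ∧ Aᶜ.Nonempty ∧
    (∀ u w : V, G.Reach cᶜ u w ↔ ((u ∈ A ∧ w ∈ A) ∨ (u ∈ Aᶜ ∧ w ∈ Aᶜ))) ∧
    (∀ e ∈ c, (G.fst e ∈ A ∧ G.snd e ∈ Aᶜ) ∨ (G.fst e ∈ Aᶜ ∧ G.snd e ∈ A))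

/-- A circuit: a cyclic sequence of pairwise distinct vertices and pairwise
distinct edges, the `i`-th edge joining the `i`-th and `(i+1)`-th vertices.
(Distinctness of the vertices encodes that every vertex is incident to at most
two of the edges of the circuit.) -/
def IsCircuit (G : Multigraph V E) {n : ℕ} (v : ZMod n → V) (ed : ZMod n → E) : Prop :=
  0 < n ∧ Function.Injective v ∧ Function.Injective ed ∧
    ∀ i, G.Joins (ed i) (v i) (v (i + 1))

/-- Two edges are circuit-connected if some circuit contains both. -/
def CircuitConnected (G : Multigraph V E) (e e' : E) : Prop :=
  ∃ (n : ℕ) (v : ZMod n → V) (ed : ZMod n → E),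
    G.IsCircuit v ed ∧ e ∈ Set.range ed ∧ e' ∈ Set.range ed

end Multigraph

namespace Multigraph

variable {V E : Type*}

lemma joins_symm (G : Multigraph V E) {e : E} {u w : V} (h : G.Joins e u w) :
    G.Joins e w u := h.elim (fun h => Or.inr h) (fun h => Or.inl h)

/-- auxiliary simple graph on `V` using only edges in `F`. -/
def SG (G : Multigraph V E) (F : Set E) : SimpleGraph V where
  Adj x y := x ≠ y ∧ ∃ e ∈ F, G.Joins e x y
  symm := by
    constructor
    rintro x y ⟨hne, e, he, hj⟩
    exact ⟨hne.symm, e, he, G.joins_symm hj⟩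
  loopless := by constructor; rintro x ⟨h, -⟩; exact h rfl

lemma adj_reach (G : Multigraph V E) {F : Set E} {x y : V} (h : (G.SG F).Adj x y) :
    G.Reach F x y := Relation.EqvGen.rel _ _ h.2

lemma reach_to_reachable (G : Multigraph V E) {F : Set E} {u w : V} (h : G.Reach F u w) :
    (G.SG F).Reachable u w := by
  induction h with
  | rel x y hxy =>
    rcases hxy with ⟨e, he, hj⟩
    by_cases hxy' : x = y
    · subst hxy'; rfl
    · exact SimpleGraph.Adj.reachable ⟨hxy', e, he, hj⟩
  | refl x => rfl
  | symm x y _ ih => exact ih.symm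
  | trans x y z _ _ ih1 ih2 => exact ih1.trans ih2

lemma exists_nodup_path (G : Multigraph V E) {F : Set E} {u w : V}
    (h : (G.SG F).Reachable u w) :
    ∃ l : List V, ∃ hne : l ≠ [], l.Nodup ∧ l.Chain' (G.SG F).Adj ∧
      l.head hne = u ∧ l.getLast hne = w := by
  classical
  obtain ⟨p⟩ := h
  obtain ⟨q, hq⟩ := p.toPath
  exact ⟨q.support, q.support_ne_nil, hq.support_nodup, q.isChain_adj_support,
    q.head_support, q.getLast_support⟩

lemma chain_mem (G : Multigraph V E) {F : Set E} {A : Set V}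
    (hsame : ∀ x y, (G.SG F).Adj x y → (x ∈ A ↔ y ∈ A)) :
    ∀ (t : List V) (x : V), (x :: t).Chain' (G.SG F).Adj → x ∈ A → ∀ y ∈ x :: t, y ∈ A := by
  intro t
  induction t with
  | nil => intro x _ hx y hy; simp at hy; subst hy; exact hx
  | cons z t ih =>
    intro x hc hx y hy
    simp only [List.Chain', List.isChain_cons_cons] at hc
    rcases List.mem_cons.1 hy with rfl | hy
    · exact hx
    · exact ih z hc.2 ((hsame x z hc.1).1 hx) y hy

lemma chain_edges (G : Multigraph V E) {F : Set E} :
    ∀ (t : List V) (x : V), (x :: t).Chain' (G.SG F).Adj →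
    ∃ q : List E, ∃ hql : q.length + 1 = (x :: t).length,
      ∀ (i : ℕ) (h1 : i < q.length),
        q[i] ∈ F ∧ G.Joins q[i] ((x :: t)[i]'(by omega))
          ((x :: t)[i+1]'(by omega)) := by
  intro t
  induction t with
  | nil => intro x _; exact ⟨[], rfl, fun i h1 => by simp at h1⟩
  | cons z t ih =>
    intro x hc
    simp only [List.Chain', List.isChain_cons_cons] at hc
    obtain ⟨⟨hne, e, he, hj⟩, hc'⟩ := hc
    obtain ⟨q, hqlen, hq⟩ := ih z hc'
    refine ⟨e :: q, by simp at hqlen ⊢; omega, ?_⟩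
    intro i h1
    cases i with
    | zero => simpa using ⟨he, hj⟩
    | succ i =>
      have := hq i (by simp at h1 ⊢; omega)
      simpa using this

lemma nodup_edges (G : Multigraph V E) (l : List V) (q : List E)
    (hl : l.Nodup) (hlen : q.length + 1 = l.length)
    (hj : ∀ (i : ℕ) (h1 : i < q.length),
      G.Joins q[i] (l[i]'(by omega)) (l[i+1]'(by omega))) :
    q.Nodup := by
  rw [List.nodup_iff_injective_get]
  rintro ⟨i, hi⟩ ⟨j, hj'⟩ heq
  simp only [List.get_eq_getElem] at heq
  have h1 := hj i hi
  have h2 := hj j hj'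
  rw [heq] at h1
  simp only [Fin.mk.injEq]
  rcases h1 with ⟨ha, hb⟩ | ⟨ha, hb⟩ <;> rcases h2 with ⟨hc, hd⟩ | ⟨hc, hd⟩
  · have : i = j := hl.getElem_inj_iff.1 (ha.symm.trans hc)
    omega
  · have e1 : i = j + 1 := hl.getElem_inj_iff.1 (ha.symm.trans hc)
    have e2 : i + 1 = j := hl.getElem_inj_iff.1 (hb.symm.trans hd)
    omega
  · have e1 : i + 1 = j := hl.getElem_inj_iff.1 (ha.symm.trans hc)
    have e2 : i = j + 1 := hl.getElem_inj_iff.1 (hb.symm.trans hd)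
    omega
  · have : i + 1 = j + 1 := hl.getElem_inj_iff.1 (ha.symm.trans hc)
    omega

variable {V E : Type*}

lemma getElem_app_left' {α : Type*} (l1 l2 : List α) {i : ℕ} (h : i < l1.length)
    {h' : i < (l1 ++ l2).length} : (l1 ++ l2)[i] = l1[i] := List.getElem_append_left h

lemma getElem_app_right' {α : Type*} (l1 l2 : List α) {i j : ℕ} (hj : j < l2.length)
    (hij : i = l1.length + j) {h' : i < (l1 ++ l2).length} : (l1 ++ l2)[i] = l2[j] := by
  subst hij
  rw [List.getElem_append_right (by omega)]
  simp only [Nat.add_sub_cancel_left]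

lemma getElem_cons' {α : Type*} (a : α) (l : List α) {i j : ℕ} (hj : j < l.length)
    (hij : i = j + 1) {h' : i < (a :: l).length} : (a :: l)[i] = l[j] := by
  subst hij
  exact List.getElem_cons_succ a l j h'

lemma build_circuit (G : Multigraph V E) {A : Set V} (lA lB : List V) (qA qB : List E)
    (e e' : E)
    (hAne : lA ≠ []) (hBne : lB ≠ [])
    (hAnd : lA.Nodup) (hBnd : lB.Nodup)
    (hAmem : ∀ x ∈ lA, x ∈ A) (hBmem : ∀ x ∈ lB, x ∉ A)
    (hqA : qA.length + 1 = lA.length) (hqB : qB.length + 1 = lB.length)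
    (hjA : ∀ (i : ℕ) (h1 : i < qA.length),
      G.Joins qA[i] (lA[i]'(by omega)) (lA[i+1]'(by omega)))
    (hjB : ∀ (i : ℕ) (h1 : i < qB.length),
      G.Joins qB[i] (lB[i]'(by omega)) (lB[i+1]'(by omega)))
    (hee' : e ≠ e')
    (heX : ¬(G.fst e ∈ A ∧ G.snd e ∈ A)) (heY : ¬(G.fst e ∉ A ∧ G.snd e ∉ A))
    (he'X : ¬(G.fst e' ∈ A ∧ G.snd e' ∈ A)) (he'Y : ¬(G.fst e' ∉ A ∧ G.snd e' ∉ A))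
    (hje : G.Joins e (lB.getLast hBne) (lA.head hAne))
    (hje' : G.Joins e' (lA.getLast hAne) (lB.head hBne)) :
    G.CircuitConnected e e' := by
  classical
  set kA := lA.length with hkA
  set kB := lB.length with hkB
  have hkA1 : 1 ≤ kA := by
    rcases lA with _ | ⟨x, t⟩; · exact absurd rfl hAne
    · simp [hkA]
  have hkB1 : 1 ≤ kB := by
    rcases lB with _ | ⟨x, t⟩; · exact absurd rfl hBne
    · simp [hkB]
  set n := kA + kB with hn
  set L : List V := lA ++ lB with hL
  set M : List E := qA ++ e' :: (qB ++ [e]) with hM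
  have hLlen : L.length = n := by simp [hL, hn]; rfl
  have hMlen : M.length = n := by simp [hM, hn]; omega
  have hqAA : ∀ f ∈ qA, G.fst f ∈ A ∧ G.snd f ∈ A := by
    intro f hf
    obtain ⟨i, hi, rfl⟩ := List.mem_iff_getElem.1 hf
    have h := hjA i hi
    have m1 : lA[i]'(by omega) ∈ A := hAmem _ (List.getElem_mem _)
    have m2 : lA[i+1]'(by omega) ∈ A := hAmem _ (List.getElem_mem _)
    rcases h with ⟨h1, h2⟩ | ⟨h1, h2⟩ <;> constructor <;> simp_all
  have hqBB : ∀ f ∈ qB, G.fst f ∉ A ∧ G.snd f ∉ A := by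
    intro f hf
    obtain ⟨i, hi, rfl⟩ := List.mem_iff_getElem.1 hf
    have h := hjB i hi
    have m1 : lB[i]'(by omega) ∉ A := hBmem _ (List.getElem_mem _)
    have m2 : lB[i+1]'(by omega) ∉ A := hBmem _ (List.getElem_mem _)
    rcases h with ⟨h1, h2⟩ | ⟨h1, h2⟩ <;> constructor <;> simp_all
  have heqA : e ∉ qA := fun hf => heX (hqAA e hf)
  have heqB : e ∉ qB := fun hf => heY (hqBB e hf)
  have he'qA : e' ∉ qA := fun hf => he'X (hqAA e' hf)
  have he'qB : e' ∉ qB := fun hf => he'Y (hqBB e' hf)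
  have hLnd : L.Nodup := by
    rw [hL, List.nodup_append]
    exact ⟨hAnd, hBnd, fun x hx y hx' hxy => hBmem y hx' (hxy ▸ hAmem x hx)⟩
  have hqAnd : qA.Nodup := G.nodup_edges lA qA hAnd hqA hjA
  have hqBnd : qB.Nodup := G.nodup_edges lB qB hBnd hqB hjB
  have hMnd : M.Nodup := by
    rw [hM, List.nodup_append]
    refine ⟨hqAnd, ?_, ?_⟩
    · rw [List.nodup_cons]
      constructor
      · simp only [List.mem_append, List.mem_singleton]
        rintro (h | rfl)
        · exact he'qB h
        · exact hee' rfl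
      · rw [List.nodup_append]
        refine ⟨hqBnd, List.nodup_singleton e, ?_⟩
        intro x hx y hx' hxy
        rw [List.mem_singleton] at hx'
        subst hx'
        subst hxy
        exact heqB hx
    · intro f hf g hf' hfg
      subst hfg
      have hA := hqAA f hf
      simp only [List.mem_cons, List.mem_append, List.mem_singleton,
        List.not_mem_nil, or_false] at hf'
      rcases hf' with rfl | hf' | rfl
      · exact he'X hA
      · exact (hqBB f hf').1 hA.1
      · exact heX hA
  have hn2 : 2 ≤ n := by omega
  have hMe : M[n-1]'(by omega) = e := by
    have s1 : M[n-1]'(by omega) = (e' :: (qB ++ [e]))[qB.length + 1]'(by simp) :=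
      getElem_app_right' qA _ (by simp) (by omega)
    have s2 : (e' :: (qB ++ [e]))[qB.length + 1]'(by simp)
        = (qB ++ [e])[qB.length]'(by simp) :=
      getElem_cons' _ _ (by simp) rfl
    have s3 : (qB ++ [e])[qB.length]'(by simp) = e := by
      rw [List.getElem_append_right (by omega)]
      simp
    exact s1.trans (s2.trans s3)
  have hMe' : M[kA-1]'(by omega) = e' := by
    have s1 : M[kA-1]'(by omega) = (e' :: (qB ++ [e]))[0]'(by simp) :=
      getElem_app_right' qA _ (by simp) (by omega)
    rw [s1, List.getElem_cons_zero]
  have key : ∀ (i : ℕ) (hi : i < n),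
      G.Joins (M[i]'(by omega)) (L[i]'(by omega)) (L[(i+1) % n]'(by
        have := Nat.mod_lt (i+1) (show 0 < n by omega); omega)) := by
    intro i hi
    rcases lt_trichotomy (i+1) kA with hlt | heq | hgt
    · -- inside lA
      have hmod : (i+1) % n = i + 1 := Nat.mod_eq_of_lt (by omega)
      have e1 : L[i]'(by omega) = lA[i]'(by omega) := getElem_app_left' lA lB (by omega)
      have e2 : L[(i+1) % n]'(by have := Nat.mod_lt (i+1) (show 0 < n by omega); omega)
          = lA[i+1]'(by omega) := by
        simp only [hmod]
        exact getElem_app_left' lA lB (by omega)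
      have e3 : M[i]'(by omega) = qA[i]'(by omega) := getElem_app_left' qA _ (by omega)
      rw [e1, e2, e3]
      exact hjA i (by omega)
    · -- the e' edge, from lA.getLast to lB.head
      have hmod : (i+1) % n = kA := by rw [heq]; exact Nat.mod_eq_of_lt (by omega)
      have e1 : L[i]'(by omega) = lA.getLast hAne := by
        rw [List.getLast_eq_getElem]
        exact getElem_app_left' lA lB (by omega) |>.trans (by
          have h0 : i = lA.length - 1 := by omega
          simp only [h0])
      have e2 : L[(i+1) % n]'(by have := Nat.mod_lt (i+1) (show 0 < n by omega); omega)
          = lB.head hBne := by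
        rw [List.head_eq_getElem]
        simp only [hmod]
        exact getElem_app_right' lA lB (by omega) (by omega)
      have e3 : M[i]'(by omega) = e' := by
        have h0 : i = kA - 1 := by omega
        simp only [h0]
        exact hMe'
      rw [e1, e2, e3]
      exact hje'
    · rcases lt_trichotomy (i+1) n with hlt2 | heq2 | hgt2
      · -- inside lB
        have hmod : (i+1) % n = i + 1 := Nat.mod_eq_of_lt (by omega)
        have e1 : L[i]'(by omega) = lB[i - kA]'(by omega) :=
          getElem_app_right' lA lB (by omega) (by omega)
        have e2 : L[(i+1) % n]'(by have := Nat.mod_lt (i+1) (show 0 < n by omega); omega)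
            = lB[i - kA + 1]'(by omega) := by
          simp only [hmod]
          exact getElem_app_right' lA lB (by omega) (by omega)
        have e3 : M[i]'(by omega) = qB[i - kA]'(by omega) := by
          have s1 : M[i]'(by omega) = (e' :: (qB ++ [e]))[i - kA + 1]'(by simp; omega) :=
            getElem_app_right' qA _ (by simp; omega) (by omega)
          have s2 : (e' :: (qB ++ [e]))[i - kA + 1]'(by simp; omega)
              = (qB ++ [e])[i - kA]'(by simp; omega) :=
            getElem_cons' _ _ (by simp; omega) rfl
          have s3 : (qB ++ [e])[i - kA]'(by simp; omega) = qB[i - kA]'(by omega) :=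
            getElem_app_left' qB [e] (by omega)
          exact s1.trans (s2.trans s3)
        rw [e1, e2, e3]
        exact hjB (i - kA) (by omega)
      · -- the e edge, from lB.getLast to lA.head
        have hmod : (i+1) % n = 0 := by rw [heq2]; exact Nat.mod_self n
        have e1 : L[i]'(by omega) = lB.getLast hBne := by
          rw [List.getLast_eq_getElem]
          exact getElem_app_right' lA lB (by omega) (by omega)
        have e2 : L[(i+1) % n]'(by have := Nat.mod_lt (i+1) (show 0 < n by omega); omega)
            = lA.head hAne := by
          rw [List.head_eq_getElem]
          simp only [hmod]
          exact getElem_app_left' lA lB (by omega)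
        have e3 : M[i]'(by omega) = e := by
          have h0 : i = n - 1 := by omega
          simp only [h0]
          exact hMe
        rw [e1, e2, e3]
        exact hje
      · omega
  haveI : NeZero n := ⟨by omega⟩
  haveI : Fact (1 < n) := ⟨by omega⟩
  refine ⟨n, fun i => L[i.val]'(by have := ZMod.val_lt i; omega),
    fun i => M[i.val]'(by have := ZMod.val_lt i; omega), ⟨by omega, ?_, ?_, ?_⟩, ?_, ?_⟩
  · intro i j h
    exact ZMod.val_injective n (hLnd.getElem_inj_iff.1 h)
  · intro i j h
    exact ZMod.val_injective n (hMnd.getElem_inj_iff.1 h)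
  · intro i
    have hv : (i + 1).val = (i.val + 1) % n := by
      rw [ZMod.val_add, ZMod.val_one]
    have hk := key i.val (by have := ZMod.val_lt i; omega)
    simp only [hv]
    exact hk
  · refine ⟨((n - 1 : ℕ) : ZMod n), ?_⟩
    have hv : ((n - 1 : ℕ) : ZMod n).val = n - 1 := ZMod.val_cast_of_lt (by omega)
    simp only [hv]
    exact hMe
  · refine ⟨((kA - 1 : ℕ) : ZMod n), ?_⟩
    have hv : ((kA - 1 : ℕ) : ZMod n).val = kA - 1 := ZMod.val_cast_of_lt (by omega)
    simp only [hv]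
    exact hMe'



lemma chain_edges' (G : Multigraph V E) {F : Set E} (l : List V) (hne : l ≠ [])
    (hc : l.Chain' (G.SG F).Adj) :
    ∃ q : List E, ∃ hql : q.length + 1 = l.length,
      ∀ (i : ℕ) (h1 : i < q.length),
        q[i] ∈ F ∧ G.Joins q[i] (l[i]'(by omega)) (l[i+1]'(by omega)) := by
  rcases l with _ | ⟨x, t⟩
  · exact absurd rfl hne
  · exact G.chain_edges t x hc

lemma chain_mem' (G : Multigraph V E) {F : Set E} {A : Set V}
    (hsame : ∀ x y, (G.SG F).Adj x y → (x ∈ A ↔ y ∈ A))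
    (l : List V) (hne : l ≠ []) (hc : l.Chain' (G.SG F).Adj)
    (hx : l.head hne ∈ A) : ∀ y ∈ l, y ∈ A := by
  rcases l with _ | ⟨x, t⟩
  · exact absurd rfl hne
  · exact G.chain_mem hsame t x hc (by simpa using hx)

end Multigraph

theorem stmt_3 {V E : Type*} [Fintype V] [Fintype E]
    (G : Multigraph V E) (hconn : G.Connected)
    (c : Set E) (hc : G.IsCut c) :
    ∀ e ∈ c, ∀ e' ∈ c, e = e' ∨ G.CircuitConnected e e' := by
  intro e he e' he'
  by_cases heq : e = e'
  · exact Or.inl heq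
  right
  obtain ⟨A, hA1, hA2, hiff, hcut⟩ := hc
  have side : ∀ f ∈ c, ∃ a b, a ∈ A ∧ b ∉ A ∧ G.Joins f a b ∧
      ¬(G.fst f ∈ A ∧ G.snd f ∈ A) ∧ ¬(G.fst f ∉ A ∧ G.snd f ∉ A) := by
    intro f hf
    rcases hcut f hf with ⟨h1, h2⟩ | ⟨h1, h2⟩
    · exact ⟨_, _, h1, h2, Or.inl ⟨rfl, rfl⟩, fun h => h2 h.2, fun h => h.1 h1⟩
    · exact ⟨_, _, h2, h1, Or.inr ⟨rfl, rfl⟩, fun h => h1 h.1, fun h => h.2 h2⟩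
  obtain ⟨a, b, ha, hb, hab, heX, heY⟩ := side e he
  obtain ⟨a', b', ha', hb', hab', he'X, he'Y⟩ := side e' he'
  have hreachA : G.Reach cᶜ a a' := (hiff a a').2 (Or.inl ⟨ha, ha'⟩)
  have hreachB : G.Reach cᶜ b' b := (hiff b' b).2 (Or.inr ⟨hb', hb⟩)
  obtain ⟨lA, hAne, hAnd, hAch, hAh, hAl⟩ :=
    G.exists_nodup_path (G.reach_to_reachable hreachA)
  obtain ⟨lB, hBne, hBnd, hBch, hBh, hBl⟩ :=
    G.exists_nodup_path (G.reach_to_reachable hreachB)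
  have hsame : ∀ x y, (G.SG cᶜ).Adj x y → (x ∈ A ↔ y ∈ A) := by
    intro x y hxy
    rcases (hiff x y).1 (G.adj_reach hxy) with ⟨h1, h2⟩ | ⟨h1, h2⟩
    · exact iff_of_true h1 h2
    · exact iff_of_false h1 h2
  have hsame' : ∀ x y, (G.SG cᶜ).Adj x y → (x ∈ Aᶜ ↔ y ∈ Aᶜ) := by
    intro x y hxy
    exact not_iff_not.2 (hsame x y hxy)
  have hAmem : ∀ x ∈ lA, x ∈ A := G.chain_mem' hsame lA hAne hAch (hAh ▸ ha)
  have hBmem : ∀ x ∈ lB, x ∉ A := G.chain_mem' hsame' lB hBne hBch (hBh ▸ hb')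
  obtain ⟨qA, hqAlen, hqAp⟩ := G.chain_edges' lA hAne hAch
  obtain ⟨qB, hqBlen, hqBp⟩ := G.chain_edges' lB hBne hBch
  exact G.build_circuit lA lB qA qB e e' hAne hBne hAnd hBnd hAmem hBmem hqAlen hqBlen
    (fun i h1 => (hqAp i h1).2) (fun i h1 => (hqBp i h1).2) heq heX heY he'X he'Y
    (by rw [hBl, hAh]; exact G.joins_symm hab)
    (by rw [hAl, hBh]; exact hab')
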